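/- arXiv:1806.05546 — 2 statements merged into one kernel-verified Lean document; each statement's English description precedes it below -/
import Mathlib

section
/- Let WF iterates be defined by f_{τ+1} = f_τ − μ̄·G(f_τ) starting from an arbitrary f_0 ∈ ℂ^N, where μ̄ = 1/λmax(A^H A) and G is the generalized gradient of the amplitude loss L. Then the norm of the generalized gradient along the iterates tends to zero: lim_{τ→∞} ‖G(f_τ)‖₂ = 0. -/
open scoped BigOperators
open Matrix

noncomputable section

namespace AWF

/-- Complex signum: `z/|z|` for `z ≠ 0`, and `0` at `0`. -/
def csgn (z : ℂ) : ℂ := if z = 0 then 0 else z / ((‖z‖ : ℝ) : ℂ)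

variable {M N : ℕ}

/-- Amplitude loss `L(f) = ∑ (b_m − |(Af)_m|)²`. -/
def ampLoss (A : Matrix (Fin M) (Fin N) ℂ) (b : Fin M → ℝ) (f : Fin N → ℂ) : ℝ :=
  ∑ m, (b m - ‖A.mulVec f m‖) ^ 2

/-- Generalized (Wirtinger) gradient `G(f) = Aᴴ(Af − b ⊙ sgn(Af))`. -/
def wGrad (A : Matrix (Fin M) (Fin N) ℂ) (b : Fin M → ℝ) (f : Fin N → ℂ) : Fin N → ℂ :=
  Aᴴ.mulVec (fun m => A.mulVec f m - (b m : ℂ) * csgn (A.mulVec f m))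

/-- Euclidean (ℓ₂) norm of a complex vector. -/
def norm2 {n : ℕ} (v : Fin n → ℂ) : ℝ := Real.sqrt (∑ i, ‖v i‖ ^ 2)

/-- The largest eigenvalue of the positive semidefinite Hermitian matrix `Aᴴ A`. -/
def lamMax (A : Matrix (Fin M) (Fin N) ℂ) : ℝ :=
  ⨆ i, (Matrix.isHermitian_conjTranspose_mul_self A).eigenvalues i

end AWF
namespace AWF

lemma mul_star_self' (z : ℂ) : z * star z = ((‖z‖ ^ 2 : ℝ) : ℂ) := by
  rw [← starRingEnd_apply, Complex.mul_conj, Complex.normSq_eq_norm_sq]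

lemma star_dot_self {n : ℕ} (v : Fin n → ℂ) :
    star v ⬝ᵥ v = ((∑ i, ‖v i‖ ^ 2 : ℝ) : ℂ) := by
  simp only [dotProduct, Pi.star_apply, Complex.ofReal_sum]
  exact Finset.sum_congr rfl fun i _ => by rw [mul_comm, mul_star_self']

lemma csgn_abs {z : ℂ} (hz : z ≠ 0) : ‖csgn z‖ = 1 := by
  rw [csgn, if_neg hz, norm_div, Complex.norm_real, Real.norm_eq_abs, abs_of_nonneg (norm_nonneg z),
    div_self (norm_ne_zero_iff.mpr hz)]

lemma pointwise_le {b : ℝ} (hb : 0 ≤ b) (z w : ℂ) :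
    (b - ‖z‖) ^ 2 ≤ ‖z - (b : ℂ) * csgn w‖ ^ 2 + (if w = 0 then b ^ 2 else 0) := by
  by_cases hw : w = 0
  · subst hw
    simp only [if_pos rfl, csgn]
    norm_num
    nlinarith [norm_nonneg z, mul_nonneg hb (norm_nonneg z)]
  · rw [if_neg hw, add_zero]
    have h1 : ‖z - (b : ℂ) * csgn w‖ ^ 2 = Complex.normSq (z - (b : ℂ) * csgn w) := by
      rw [Complex.sq_norm]
    have h2 : Complex.normSq ((b : ℂ) * csgn w) = b ^ 2 := by
      rw [Complex.normSq_eq_norm_sq, norm_mul, Complex.norm_real, Real.norm_eq_abs, csgn_abs hw, mul_one,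
        abs_of_nonneg hb]
    have h3 : (z * (starRingEnd ℂ) ((b : ℂ) * csgn w)).re ≤ b * ‖z‖ := by
      calc (z * (starRingEnd ℂ) ((b : ℂ) * csgn w)).re
          ≤ ‖z * (starRingEnd ℂ) ((b : ℂ) * csgn w)‖ := Complex.re_le_norm _
        _ = ‖z‖ * (b * 1) := by
            rw [norm_mul, Complex.norm_conj, norm_mul, Complex.norm_real, Real.norm_eq_abs,
              abs_of_nonneg hb, csgn_abs hw]
        _ = b * ‖z‖ := by ring
    calc (b - ‖z‖) ^ 2 = ‖z‖ ^ 2 + b ^ 2 - 2 * (b * ‖z‖) := by ring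
      _ ≤ ‖z‖ ^ 2 + b ^ 2
          - 2 * (z * (starRingEnd ℂ) ((b : ℂ) * csgn w)).re := by linarith
      _ = ‖z - (b : ℂ) * csgn w‖ ^ 2 := by
          rw [h1, Complex.normSq_sub, h2, Complex.normSq_eq_norm_sq]

lemma pointwise_eq {b : ℝ} (w : ℂ) :
    (b - ‖w‖) ^ 2 = ‖w - (b : ℂ) * csgn w‖ ^ 2 + (if w = 0 then b ^ 2 else 0) := by
  by_cases hw : w = 0
  · simp [hw, csgn]
  · rw [if_neg hw, add_zero, csgn, if_neg hw]
    have habs : (‖w‖ : ℝ) ≠ 0 := norm_ne_zero_iff.mpr hw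
    have habs' : ((‖w‖ : ℝ) : ℂ) ≠ 0 := by exact_mod_cast habs
    have h : w - (b : ℂ) * (w / ((‖w‖ : ℝ) : ℂ)) =
        (((‖w‖ - b) / ‖w‖ : ℝ) : ℂ) * w := by
      push_cast
      field_simp
    rw [h, norm_mul, Complex.norm_real, Real.norm_eq_abs, mul_pow, sq_abs,
      div_pow]
    field_simp
    ring

theorem rayleigh {M N : ℕ} (A : Matrix (Fin M) (Fin N) ℂ) (v : Fin N → ℂ) :
    ∑ m, ‖(A *ᵥ v) m‖ ^ 2 ≤ lamMax A * ∑ n, ‖v n‖ ^ 2 := by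
  set hB := Matrix.isHermitian_conjTranspose_mul_self A with hhB
  set U : Matrix (Fin N) (Fin N) ℂ := (hB.eigenvectorUnitary : Matrix (Fin N) (Fin N) ℂ) with hU
  set w : Fin N → ℂ := (star U) *ᵥ v with hw
  have hUU : U * star U = 1 := (Matrix.mem_unitaryGroup_iff).mp hB.eigenvectorUnitary.2
  have hsw : star v ᵥ* U = star w := by
    rw [hw, Matrix.star_mulVec, Matrix.star_eq_conjTranspose, Matrix.conjTranspose_conjTranspose]
  have h1 : star v ⬝ᵥ ((Aᴴ * A) *ᵥ v)
      = ∑ j, ((hB.eigenvalues j : ℂ)) * (star (w j) * w j) := by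
    conv_lhs => rw [hB.spectral_theorem, Unitary.conjStarAlgAut_apply]
    rw [← Matrix.mulVec_mulVec, ← Matrix.mulVec_mulVec, Matrix.dotProduct_mulVec, hsw,
      Matrix.dotProduct_mulVec]
    have hcoe : ∀ r : ℝ, (RCLike.ofReal r : ℂ) = Complex.ofReal r := fun r => rfl
    simp only [Matrix.vecMul_diagonal, dotProduct, Pi.star_apply, Function.comp_apply,
      hcoe]
    refine Finset.sum_congr rfl fun j _ => ?_
    rw [← hU, hw]
    ring
  have h2 : ∑ j, ‖w j‖ ^ 2 = ∑ n, ‖v n‖ ^ 2 := by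
    have key : star w ⬝ᵥ w = star v ⬝ᵥ v := by
      conv_lhs => rw [← hsw, hw, Matrix.dotProduct_mulVec, Matrix.vecMul_vecMul, hUU,
        Matrix.vecMul_one]
    have := key
    rw [star_dot_self, star_dot_self] at this
    exact_mod_cast this
  have h3 : ∑ m, ‖(A *ᵥ v) m‖ ^ 2 = (star v ⬝ᵥ ((Aᴴ * A) *ᵥ v)).re := by
    rw [← Matrix.mulVec_mulVec, Matrix.dotProduct_mulVec, ← Matrix.star_mulVec,
      star_dot_self]
    simp [← Complex.ofReal_pow]
  have hbdd : BddAbove (Set.range hB.eigenvalues) := Set.Finite.bddAbove (Set.finite_range _)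
  have h4 : ∀ j, hB.eigenvalues j ≤ lamMax A := fun j => le_ciSup hbdd j
  calc ∑ m, ‖(A *ᵥ v) m‖ ^ 2 = (∑ j, ((hB.eigenvalues j : ℂ)) * (star (w j) * w j)).re := by
        rw [h3, h1]
    _ = ∑ j, hB.eigenvalues j * ‖w j‖ ^ 2 := by
        rw [Complex.re_sum]
        refine Finset.sum_congr rfl fun j _ => ?_
        rw [mul_comm (star (w j)), mul_star_self', ← Complex.ofReal_mul]
        exact Complex.ofReal_re _
    _ ≤ ∑ j, lamMax A * ‖w j‖ ^ 2 :=
        Finset.sum_le_sum fun j _ => mul_le_mul_of_nonneg_right (h4 j) (by positivity)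
    _ = lamMax A * ∑ n, ‖v n‖ ^ 2 := by rw [← Finset.mul_sum, h2]

-- cross term
lemma cross_term {M N : ℕ} (A : Matrix (Fin M) (Fin N) ℂ) (x : Fin M → ℂ) :
    (∑ m, x m * star ((A *ᵥ (Aᴴ *ᵥ x)) m)).re = ∑ n, ‖(Aᴴ *ᵥ x) n‖ ^ 2 := by
  set G : Fin N → ℂ := Aᴴ *ᵥ x with hG
  have h1 : ∑ m, x m * star ((A *ᵥ G) m) = star (star x ⬝ᵥ (A *ᵥ G)) := by
    rw [dotProduct, star_sum]
    exact Finset.sum_congr rfl fun m _ => by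
      rw [StarMul.star_mul, Pi.star_apply, star_star, mul_comm]
  have h2 : star x ⬝ᵥ (A *ᵥ G) = star G ⬝ᵥ G := by
    rw [Matrix.dotProduct_mulVec]
    congr 1
    rw [hG, Matrix.star_mulVec, Matrix.conjTranspose_conjTranspose]
  rw [h1, h2, star_dot_self]
  simp [← Complex.ofReal_sum]

lemma normsub (x y : ℂ) (μ : ℝ) :
    ‖x - (μ : ℂ) * y‖ ^ 2 = ‖x‖ ^ 2 + μ ^ 2 * ‖y‖ ^ 2 - 2 * (μ * (x * star y).re) := by
  have h1 : Complex.normSq ((μ : ℂ) * y) = μ ^ 2 * ‖y‖ ^ 2 := by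
    rw [_root_.map_mul, Complex.normSq_ofReal, Complex.normSq_eq_norm_sq]
    ring
  have h2 : (x * (starRingEnd ℂ) ((μ : ℂ) * y)).re = μ * (x * star y).re := by
    rw [_root_.map_mul, Complex.conj_ofReal, mul_left_comm, Complex.re_ofReal_mul,
      ← starRingEnd_apply]
  rw [Complex.sq_norm (x - (μ : ℂ) * y), Complex.normSq_sub, h1, h2,
    Complex.normSq_eq_norm_sq]

theorem descent {M N : ℕ} (A : Matrix (Fin M) (Fin N) ℂ) (b : Fin M → ℝ) (hb : ∀ m, 0 ≤ b m)
    (hlam : 0 < lamMax A) (f : Fin N → ℂ) :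
    ampLoss A b (f - (1 / lamMax A) • wGrad A b f)
      ≤ ampLoss A b f - (1 / lamMax A) * ∑ n, ‖wGrad A b f n‖ ^ 2 := by
  set μ : ℝ := 1 / lamMax A with hμ
  have hμpos : 0 < μ := by positivity
  set c : Fin M → ℂ := fun m => (b m : ℂ) * csgn ((A *ᵥ f) m) with hc
  set x : Fin M → ℂ := fun m => (A *ᵥ f) m - c m with hx
  have hG : wGrad A b f = Aᴴ *ᵥ x := rfl
  set G : Fin N → ℂ := wGrad A b f with hGdef
  set y : Fin M → ℂ := A *ᵥ G with hy
  set Cst : ℝ := ∑ m, (if (A *ᵥ f) m = 0 then (b m) ^ 2 else 0) with hCst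
  have hAg : ∀ m, (A *ᵥ (f - μ • G)) m - c m = x m - (μ : ℂ) * y m := by
    intro m
    rw [Matrix.mulVec_sub, Matrix.mulVec_smul]
    simp only [Pi.sub_apply, Pi.smul_apply, hx, hy, Complex.real_smul]
    ring
  -- majorization
  have hmaj : ampLoss A b (f - μ • G) ≤ (∑ m, ‖x m - (μ : ℂ) * y m‖ ^ 2) + Cst := by
    rw [ampLoss, hCst, ← Finset.sum_add_distrib]
    refine Finset.sum_le_sum fun m _ => ?_
    have := pointwise_le (hb m) ((A *ᵥ (f - μ • G)) m) ((A *ᵥ f) m)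
    rw [← hAg m]
    exact this
  -- tangency
  have htan : ampLoss A b f = (∑ m, ‖x m‖ ^ 2) + Cst := by
    rw [ampLoss, hCst, ← Finset.sum_add_distrib]
    exact Finset.sum_congr rfl fun m _ => pointwise_eq _
  -- quadratic expansion
  have hquad : ∑ m, ‖x m - (μ : ℂ) * y m‖ ^ 2
      = (∑ m, ‖x m‖ ^ 2) + μ ^ 2 * ∑ m, ‖y m‖ ^ 2 - 2 * (μ * ∑ n, ‖G n‖ ^ 2) := by
    have e1 : ∑ m, ‖x m - (μ : ℂ) * y m‖ ^ 2
        = ∑ m, (‖x m‖ ^ 2 + μ ^ 2 * ‖y m‖ ^ 2 - 2 * (μ * (x m * star (y m)).re)) :=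
      Finset.sum_congr rfl fun m _ => normsub _ _ _
    have e2 : ∑ m, (x m * star (y m)).re = ∑ n, ‖G n‖ ^ 2 := by
      rw [← Complex.re_sum]
      exact cross_term A x
    rw [e1, Finset.sum_sub_distrib, Finset.sum_add_distrib, ← Finset.mul_sum, ← Finset.mul_sum,
      ← Finset.mul_sum, e2]
  -- rayleigh on G
  have hray : ∑ m, ‖y m‖ ^ 2 ≤ lamMax A * ∑ n, ‖G n‖ ^ 2 := rayleigh A G
  have hμ2 : μ ^ 2 * (lamMax A * ∑ n, ‖G n‖ ^ 2) = μ * ∑ n, ‖G n‖ ^ 2 := by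
    rw [hμ]; field_simp
  calc ampLoss A b (f - μ • G) ≤ (∑ m, ‖x m - (μ : ℂ) * y m‖ ^ 2) + Cst := hmaj
    _ = (∑ m, ‖x m‖ ^ 2) + Cst + μ ^ 2 * ∑ m, ‖y m‖ ^ 2 - 2 * (μ * ∑ n, ‖G n‖ ^ 2) := by
        rw [hquad]; ring
    _ ≤ (∑ m, ‖x m‖ ^ 2) + Cst + μ ^ 2 * (lamMax A * ∑ n, ‖G n‖ ^ 2)
          - 2 * (μ * ∑ n, ‖G n‖ ^ 2) := by
        have := mul_le_mul_of_nonneg_left hray (by positivity : (0:ℝ) ≤ μ ^ 2)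
        linarith
    _ = ampLoss A b f - μ * ∑ n, ‖G n‖ ^ 2 := by rw [htan, hμ2]; ring



/-- WF iterates `f_{τ+1} = f_τ − μ̄ G(f_τ)` with `μ̄ = 1/λmax(AᴴA)`
have generalized-gradient norms tending to zero. -/
theorem wf_grad_norm_tendsto_zero
    {M N : ℕ} (A : Matrix (Fin M) (Fin N) ℂ) (b : Fin M → ℝ) (hb : ∀ m, 0 ≤ b m)
    (hpos : 0 < lamMax A)
    (fhat : Fin N → ℂ) (hmin : ∀ g, ampLoss A b fhat ≤ ampLoss A b g)
    (f : ℕ → Fin N → ℂ)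
    (hiter : ∀ τ, f (τ + 1) = f τ - (1 / lamMax A) • wGrad A b (f τ)) :
    Filter.Tendsto (fun τ => norm2 (wGrad A b (f τ))) Filter.atTop (nhds 0) := by

  set μ : ℝ := 1 / lamMax A with hμ
  have hμpos : 0 < μ := by positivity
  set s : ℕ → ℝ := fun τ => ∑ n, ‖wGrad A b (f τ) n‖ ^ 2 with hs
  set a : ℕ → ℝ := fun τ => ampLoss A b (f τ) with ha
  have hdec : ∀ τ, a (τ + 1) ≤ a τ - μ * s τ := fun τ => by
    rw [ha]
    simp only
    rw [hiter τ]
    exact descent A b hb hpos (f τ)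
  have hs0 : ∀ τ, 0 ≤ s τ := fun τ => Finset.sum_nonneg fun n _ => by positivity
  have ha0 : ∀ τ, 0 ≤ a τ := fun τ => Finset.sum_nonneg fun m _ => sq_nonneg _
  have hanti : Antitone a := antitone_nat_of_succ_le fun τ => by
    have := hdec τ
    nlinarith [hs0 τ]
  have hbdd : BddBelow (Set.range a) := ⟨0, by rintro _ ⟨τ, rfl⟩; exact ha0 τ⟩
  have hconv : Filter.Tendsto a Filter.atTop (nhds (⨅ τ, a τ)) :=
    tendsto_atTop_ciInf hanti hbdd
  have hconv1 : Filter.Tendsto (fun τ => a (τ + 1)) Filter.atTop (nhds (⨅ τ, a τ)) :=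
    hconv.comp (Filter.tendsto_add_atTop_nat 1)
  have hdiff : Filter.Tendsto (fun τ => a τ - a (τ + 1)) Filter.atTop (nhds 0) := by
    have := hconv.sub hconv1
    simpa using this
  have hσ : Filter.Tendsto s Filter.atTop (nhds 0) := by
    have hub : ∀ τ, s τ ≤ (a τ - a (τ + 1)) / μ := fun τ => by
      rw [le_div_iff₀ hμpos]
      have := hdec τ
      linarith [hdec τ]
    have hlim : Filter.Tendsto (fun τ => (a τ - a (τ + 1)) / μ) Filter.atTop (nhds 0) := by
      have := hdiff.div_const μ
      simpa using this
    exact squeeze_zero hs0 hub hlim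
  have hfinal := (Real.continuous_sqrt.tendsto 0).comp hσ
  simpa [norm2, Function.comp_def, Real.sqrt_zero] using hfinal


end AWF
end
end

section
/- Under the ptychographic structure, the largest eigenvalue of A^H A equals the maximum total illumination intensity: λmax(A^H A) = α · max_{1 ≤ n ≤ N} Σ_{k=1}^K |(p_k)_n|². Equivalently, the squared operator norm of A equals α times the maximum entry of the vector Σ_{k=1}^K |p_k| ⊙ |p_k|. -/
open scoped BigOperators
open Matrix

noncomputable section

namespace AWF

/-- Under the ptychographic structure, the largest eigenvalue of `AᴴA`
equals `α · max_n ∑_k |(p_k)_n|²`, the maximum total illumination intensity. -/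
theorem ptycho_lamMax_eq_max_illumination
    {K m ℓ N : ℕ} [NeZero N]
    (p : Fin K → Fin N → ℂ) (F : Matrix (Fin m) (Fin ℓ) ℂ)
    (α : ℝ) (hα : 0 < α)
    (hF : Fᴴ * F = (α : ℂ) • (1 : Matrix (Fin ℓ) (Fin ℓ) ℂ))
    (e : Fin K → Fin ℓ → Fin N) (he : ∀ k, Function.Injective (e k))
    (hsupp : ∀ k n, p k n ≠ 0 → ∃ j, e k j = n)
    (A : Matrix (Fin K × Fin m) (Fin N) ℂ)
    (hA : ∀ k i n, A (k, i) n = (∑ j, if e k j = n then F i j else 0) * p k n) :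
    Finset.univ.sup' Finset.univ_nonempty
        (fun i => (Matrix.isHermitian_conjTranspose_mul_self A).eigenvalues i)
      = α * Finset.univ.sup' Finset.univ_nonempty
          (fun n => ∑ k, ‖p k n‖ ^ 2) := by
  set d : Fin N → ℝ := fun n => α * ∑ k, ‖p k n‖ ^ 2 with hd
  have hFF : ∀ j j' : Fin ℓ, (∑ i, star (F i j) * F i j') = if j = j' then (α : ℂ) else 0 := by
    intro j j'
    have h := congrFun (congrFun hF j) j'
    simpa [Matrix.mul_apply, Matrix.conjTranspose_apply, Matrix.one_apply,
      Matrix.smul_apply] using h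
  have key : Aᴴ * A = Matrix.diagonal (fun n => (d n : ℂ)) := by
    ext n n'
    rw [Matrix.mul_apply]
    simp only [Matrix.conjTranspose_apply]
    rw [Fintype.sum_prod_type]
    have hterm : ∀ k : Fin K, ∑ i, star (A (k, i) n) * A (k, i) n'
        = star (p k n) * p k n' * ((α : ℂ) *
            ∑ j, (if e k j = n then (1 : ℂ) else 0) * (if e k j = n' then (1 : ℂ) else 0)) := by
      intro k
      have inner : ∑ i, star (∑ j, if e k j = n then F i j else 0) *
          (∑ j, if e k j = n' then F i j else 0)
          = (α : ℂ) * ∑ j, (if e k j = n then (1 : ℂ) else 0) * (if e k j = n' then (1 : ℂ) else 0) := by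
        have hstar : ∀ i, star (∑ j, if e k j = n then F i j else 0)
            = ∑ j, if e k j = n then star (F i j) else 0 := by
          intro i
          rw [star_sum]
          exact Finset.sum_congr rfl fun j _ => by split_ifs <;> simp
        simp_rw [hstar, Finset.sum_mul_sum]
        rw [Finset.sum_comm]
        rw [Finset.mul_sum]
        refine Finset.sum_congr rfl fun j _ => ?_
        rw [Finset.sum_comm]
        have : ∀ j' : Fin ℓ, ∑ i, (if e k j = n then star (F i j) else 0) *
            (if e k j' = n' then F i j' else 0)
            = (if e k j = n then (1:ℂ) else 0) * (if e k j' = n' then (1:ℂ) else 0) *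
              (if j = j' then (α : ℂ) else 0) := by
          intro j'
          split_ifs with h1 h2 <;> simp_all [hFF j j']
        simp_rw [this]
        simp_rw [mul_ite, mul_zero]
        rw [Finset.sum_ite_eq]
        simp only [Finset.mem_univ, if_true]
        split_ifs <;> ring
      have hi : ∀ i, star (A (k, i) n) * A (k, i) n'
          = star (p k n) * p k n' * (star (∑ j, if e k j = n then F i j else 0) *
              (∑ j, if e k j = n' then F i j else 0)) := fun i => by
        rw [hA, hA, star_mul']; ring
      simp_rw [hi]
      rw [← Finset.mul_sum, inner]
    simp_rw [hterm]
    by_cases hnn : n = n'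
    · subst hnn
      rw [Matrix.diagonal_apply_eq]
      have hk : ∀ k : Fin K, star (p k n) * p k n * ((α : ℂ) *
          ∑ j, (if e k j = n then (1:ℂ) else 0) * (if e k j = n then (1:ℂ) else 0))
          = (α : ℂ) * ((‖p k n‖ ^ 2 : ℝ) : ℂ) := by
        intro k
        by_cases hp : p k n = 0
        · simp [hp]
        · obtain ⟨j0, hj0⟩ := hsupp k n hp
          have hone : ∀ j, (if e k j = n then (1:ℂ) else 0) * (if e k j = n then (1:ℂ) else 0)
              = if j = j0 then (1:ℂ) else 0 := by
            intro j
            by_cases h : e k j = n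
            · have hj : j = j0 := he k (by rw [hj0, h])
              simp [hj, hj0]
            · have hj : j ≠ j0 := fun hjj => h (hjj ▸ hj0)
              simp [h, hj]
          simp_rw [hone]
          rw [Finset.sum_ite_eq', if_pos (Finset.mem_univ j0), mul_one]
          have hc : star (p k n) * p k n = ((‖p k n‖ ^ 2 : ℝ) : ℂ) := by
            rw [Complex.star_def]
            simpa using RCLike.conj_mul (p k n)
          rw [hc, mul_comm]
      simp_rw [hk]
      rw [← Finset.mul_sum, hd]
      push_cast
      ring
    · rw [Matrix.diagonal_apply_ne _ hnn]
      apply Finset.sum_eq_zero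
      intro k _
      have hz : ∀ j, (if e k j = n then (1:ℂ) else 0) * (if e k j = n' then (1:ℂ) else 0) = 0 := by
        intro j
        split_ifs with h1 h2
        · exact absurd (h1 ▸ h2) hnn
        · simp
        · simp
        · simp
      simp [hz]
  have hrange : Set.range (Matrix.isHermitian_conjTranspose_mul_self A).eigenvalues = Set.range d := by
    rw [← Matrix.IsHermitian.spectrum_real_eq_range_eigenvalues, key]
    ext r
    rw [← spectrum.algebraMap_mem_iff ℂ, spectrum_diagonal]
    simp [eq_comm, Complex.ofReal_inj]
  have hrhs : α * Finset.univ.sup' Finset.univ_nonempty (fun n => ∑ k, ‖p k n‖ ^ 2)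
      = Finset.univ.sup' Finset.univ_nonempty d := by
    rw [Finset.comp_sup'_eq_sup'_comp Finset.univ_nonempty (fun x : ℝ => α * x)
      (fun x y => mul_max_of_nonneg x y hα.le)]
    rfl
  rw [hrhs]
  apply le_antisymm
  · refine Finset.sup'_le _ _ fun i _ => ?_
    have : (Matrix.isHermitian_conjTranspose_mul_self A).eigenvalues i ∈ Set.range d :=
      hrange ▸ Set.mem_range_self i
    obtain ⟨n, hn⟩ := this
    rw [← hn]
    exact Finset.le_sup' d (Finset.mem_univ n)
  · refine Finset.sup'_le _ _ fun n _ => ?_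
    have : d n ∈ Set.range (Matrix.isHermitian_conjTranspose_mul_self A).eigenvalues :=
      hrange.symm ▸ Set.mem_range_self n
    obtain ⟨i, hi⟩ := this
    rw [← hi]
    exact Finset.le_sup' _ (Finset.mem_univ i)
end AWF
end
end
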